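/- arXiv:2411.04916 — 2 statements merged into one kernel-verified Lean document; each statement's English description precedes it below -/
import Mathlib

section
/- For c ∈ C₁₀ and s ∈ {1, −1}, define v_{c,s} ∈ ℝ^{4×4} × ℝ ≅ ℝ^17 by setting the (i,j) coordinate to (−1)^{c(i,j)}·(2/3) and the last coordinate to s·√8/3. Then: (a) each v_{c,s} has squared Euclidean norm 8; (b) ⟨v_{c,s}, w⟩ ≤ 4 for every w in the 5346-vector 17-dimensional base configuration W; and (c) for (c,s) ≠ (c',s') with c, c' ∈ C₁₀, one has ⟨v_{c,s}, v_{c',s'}⟩ ≤ 4 if and only if either s = s' and the Hamming distance between c and c' is at least 6, or s ≠ s' and c ≠ c'. -/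
open scoped RealInnerProductSpace

/-- `C₁₀`: the set of `4×4` matrices over `𝔽₂` all of whose four row sums and
four column sums are equal to one common value in `𝔽₂`. -/
def C10 : Set (Fin 4 × Fin 4 → ZMod 2) :=
  {m | ∃ s : ZMod 2, (∀ i : Fin 4, ∑ j : Fin 4, m (i, j) = s) ∧
        (∀ j : Fin 4, ∑ i : Fin 4, m (i, j) = s)}

/-- `C₆ = C₁₀^⊥`: the dual code of `C₁₀` under the standard bilinear form. -/
def C6 : Set (Fin 4 × Fin 4 → ZMod 2) :=
  {x | ∀ c ∈ C10, (∑ p : Fin 4 × Fin 4, x p * c p) = 0}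

/-- The odd 16-dimensional kissing configuration in `ℝ^{4×4}`. -/
def oddConfig16 : Set (EuclideanSpace ℝ (Fin 4 × Fin 4)) :=
  {w | (∃ p q : Fin 4 × Fin 4, p ≠ q ∧ (w p = 2 ∨ w p = -2) ∧ (w q = 2 ∨ w q = -2) ∧
          ∀ r : Fin 4 × Fin 4, r ≠ p → r ≠ q → w r = 0) ∨
       (∃ c ∈ C6, hammingNorm c = 8 ∧
          (∀ p : Fin 4 × Fin 4, c p ≠ 0 → (w p = 1 ∨ w p = -1)) ∧
          (∀ p : Fin 4 × Fin 4, c p = 0 → w p = 0) ∧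
          Odd {p : Fin 4 × Fin 4 | w p = -1}.ncard)}

/-- The space `ℝ^{4×4} × ℝ ≅ ℝ^17` with the `L²` inner product. -/
noncomputable abbrev Space17 : Type :=
  WithLp 2 (EuclideanSpace ℝ (Fin 4 × Fin 4) × ℝ)

/-- The pair `(v, t) ∈ ℝ^{4×4} × ℝ` as an element of `ℝ^17`. -/
noncomputable def pair17 (v : EuclideanSpace ℝ (Fin 4 × Fin 4)) (t : ℝ) : Space17 :=
  (WithLp.equiv 2 (EuclideanSpace ℝ (Fin 4 × Fin 4) × ℝ)).symm (v, t)

/-- The 17-dimensional base configuration `W ⊆ ℝ^{4×4} × ℝ` of 5346 vectors. -/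
def baseConfig17 : Set Space17 :=
  (fun v => pair17 v 0) '' oddConfig16 ∪
  {x | ∃ (v : EuclideanSpace ℝ (Fin 4 × Fin 4)) (t : ℝ),
        (t = Real.sqrt 2 ∨ t = -Real.sqrt 2) ∧
        (∃ c ∈ C6, hammingNorm c = 6 ∧
          (∀ p : Fin 4 × Fin 4, c p ≠ 0 → (v p = 1 ∨ v p = -1)) ∧
          (∀ p : Fin 4 × Fin 4, c p = 0 → v p = 0) ∧
          Odd {p : Fin 4 × Fin 4 | v p = -1}.ncard) ∧
        x = pair17 v t} ∪
  {pair17 0 (Real.sqrt 8), pair17 0 (-Real.sqrt 8)}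

/-- The deep-hole vector `v_{c,s} ∈ ℝ^{4×4} × ℝ` whose `(i,j)` coordinate is
`(-1)^{c(i,j)}·(2/3)` and whose last coordinate is `s·√8/3`. -/
noncomputable def holeVector (c : Fin 4 × Fin 4 → ZMod 2) (s : ℝ) : Space17 :=
  pair17 (WithLp.toLp 2 (fun p => (if c p = 0 then (1 : ℝ) else -1) * (2 / 3))) (s * Real.sqrt 8 / 3)

/-! ### Auxiliary lemmas -/

lemma inner_pair17 (v w : EuclideanSpace ℝ (Fin 4 × Fin 4)) (a b : ℝ) :
    ⟪pair17 v a, pair17 w b⟫ = (∑ p : Fin 4 × Fin 4, v p * w p) + a * b := by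
  rw [pair17, pair17, WithLp.prod_inner_apply]
  simp [PiLp.inner_apply, RCLike.inner_apply, mul_comm]

lemma zmod2_cases (z : ZMod 2) : z = 0 ∨ z = 1 := by revert z; decide

lemma C10_sub {c c' : Fin 4 × Fin 4 → ZMod 2} (hc : c ∈ C10) (hc' : c' ∈ C10) :
    c - c' ∈ C10 := by
  obtain ⟨s, h1, h2⟩ := hc
  obtain ⟨s', h1', h2'⟩ := hc'
  exact ⟨s - s', fun i => by simp [Finset.sum_sub_distrib, h1 i, h1' i],
    fun j => by simp [Finset.sum_sub_distrib, h2 j, h2' j]⟩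

lemma C10_sum_zero {c : Fin 4 × Fin 4 → ZMod 2} (hc : c ∈ C10) :
    ∑ p : Fin 4 × Fin 4, c p = 0 := by
  obtain ⟨s, h1, _⟩ := hc
  rw [Fintype.sum_prod_type]
  simp only [h1]
  rw [Finset.sum_const, Finset.card_univ, Fintype.card_fin]
  show (4 : ℕ) • s = 0
  rw [nsmul_eq_mul]
  have : ((4 : ℕ) : ZMod 2) = 0 := by decide
  rw [this, zero_mul]

lemma hammingNorm_cast {c : Fin 4 × Fin 4 → ZMod 2} :
    ((hammingNorm c : ℕ) : ZMod 2) = ∑ p : Fin 4 × Fin 4, c p := by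
  rw [hammingNorm]
  rw [← Finset.sum_boole]
  refine Finset.sum_congr rfl fun p _ => ?_
  rcases zmod2_cases (c p) with h | h <;> simp [h]

lemma C10_even {c : Fin 4 × Fin 4 → ZMod 2} (hc : c ∈ C10) : Even (hammingNorm c) := by
  have h : ((hammingNorm c : ℕ) : ZMod 2) = 0 := by rw [hammingNorm_cast, C10_sum_zero hc]
  rw [ZMod.natCast_eq_zero_iff] at h
  exact even_iff_two_dvd.mpr h

lemma C10_norm_ne_two {c : Fin 4 × Fin 4 → ZMod 2} (hc : c ∈ C10) :
    hammingNorm c ≠ 2 := by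
  intro h2
  obtain ⟨s, h1, h2'⟩ := hc
  rw [hammingNorm] at h2
  obtain ⟨p, q, hpq, hset⟩ := Finset.card_eq_two.mp h2
  have hmem : ∀ r : Fin 4 × Fin 4, c r ≠ 0 → r = p ∨ r = q := by
    intro r hr
    have : r ∈ ({p, q} : Finset (Fin 4 × Fin 4)) := by
      rw [← hset]; simpa using hr
    simpa using this
  have hp : c p ≠ 0 := by
    have : p ∈ ({p, q} : Finset (Fin 4 × Fin 4)) := by simp
    rw [← hset] at this; simpa using this
  rcases zmod2_cases s with hs | hs
  · subst hs
    have hrow : ∃ j : Fin 4, j ≠ p.2 ∧ c (p.1, j) ≠ 0 := by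
      by_contra hall
      push_neg at hall
      have := Finset.sum_eq_single (M := ZMod 2) (s := Finset.univ) p.2
        (f := fun j => c (p.1, j))
        (fun j _ hj => by
          rcases zmod2_cases (c (p.1, j)) with h | h
          · exact h
          · exact absurd h (by simpa [h] using hall j hj))
        (by simp)
      rw [h1 p.1] at this
      exact hp (by simpa using this.symm)
    have hcol : ∃ i : Fin 4, i ≠ p.1 ∧ c (i, p.2) ≠ 0 := by
      by_contra hall
      push_neg at hall
      have := Finset.sum_eq_single (M := ZMod 2) (s := Finset.univ) p.1
        (f := fun i => c (i, p.2))
        (fun i _ hi => by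
          rcases zmod2_cases (c (i, p.2)) with h | h
          · exact h
          · exact absurd h (by simpa [h] using hall i hi))
        (by simp)
      rw [h2' p.2] at this
      exact hp (by simpa using this.symm)
    obtain ⟨j, hj, hcj⟩ := hrow
    obtain ⟨i, hi, hci⟩ := hcol
    have e1 : (p.1, j) = q := by
      rcases hmem _ hcj with h | h
      · exact absurd (congrArg Prod.snd h) hj
      · exact h
    have e2 : (i, p.2) = q := by
      rcases hmem _ hci with h | h
      · exact absurd (congrArg Prod.fst h) hi
      · exact h
    rw [← e1] at e2
    exact hi (by simpa using congrArg Prod.fst e2)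
  · subst hs
    have hrows : ∀ i : Fin 4, i = p.1 ∨ i = q.1 := by
      intro i
      have hsum := h1 i
      have : ∃ j : Fin 4, c (i, j) ≠ 0 := by
        by_contra hall
        push_neg at hall
        rw [Finset.sum_congr rfl (fun j _ => hall j)] at hsum
        simp at hsum
      obtain ⟨j, hj⟩ := this
      rcases hmem _ hj with h | h
      · exact Or.inl (congrArg Prod.fst h)
      · exact Or.inr (congrArg Prod.fst h)
    have key : ∀ a b : Fin 4, ∃ i : Fin 4, i ≠ a ∧ i ≠ b := by decide
    obtain ⟨i, hi1, hi2⟩ := key p.1 q.1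
    rcases hrows i with h | h
    · exact hi1 h
    · exact hi2 h

lemma exists_neg_term {x c : Fin 4 × Fin 4 → ZMod 2} (hx : x ∈ C6) (hc : c ∈ C10)
    {w : EuclideanSpace ℝ (Fin 4 × Fin 4)}
    (h1 : ∀ p, x p ≠ 0 → (w p = 1 ∨ w p = -1))
    (h2 : ∀ p, x p = 0 → w p = 0)
    (h3 : Odd {p : Fin 4 × Fin 4 | w p = -1}.ncard) :
    ∃ p, x p ≠ 0 ∧ (if c p = 0 then (1:ℝ) else -1) * w p = -1 := by
  by_contra hall
  push_neg at hall
  have hiff : ∀ p, w p = -1 ↔ (x p ≠ 0 ∧ c p ≠ 0) := by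
    intro p
    constructor
    · intro hw
      have hxp : x p ≠ 0 := fun h0 => by simp [h2 p h0] at hw
      refine ⟨hxp, fun hcp => ?_⟩
      have := hall p hxp
      rw [if_pos hcp, one_mul] at this
      exact this hw
    · rintro ⟨hxp, hcp⟩
      have := hall p hxp
      rw [if_neg hcp] at this
      rcases h1 p hxp with h | h
      · exact absurd (by rw [h]; ring) this
      · exact h
  have hcard : {p : Fin 4 × Fin 4 | w p = -1}.ncard
      = (Finset.univ.filter fun p => x p ≠ 0 ∧ c p ≠ 0).card := by
    rw [Set.ncard_eq_toFinset_card']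
    congr 1
    ext p
    simp [hiff p]
  have hsum : ((Finset.univ.filter fun p : Fin 4 × Fin 4 => x p ≠ 0 ∧ c p ≠ 0).card : ZMod 2)
      = ∑ p : Fin 4 × Fin 4, x p * c p := by
    rw [← Finset.sum_boole]
    refine Finset.sum_congr rfl fun p _ => ?_
    rcases zmod2_cases (x p) with h | h <;> rcases zmod2_cases (c p) with h' | h' <;>
      simp [h, h']
  rw [hx c hc] at hsum
  rw [hcard] at h3
  rw [Nat.odd_iff] at h3
  have : (2 : ℕ) ∣ (Finset.univ.filter fun p : Fin 4 × Fin 4 => x p ≠ 0 ∧ c p ≠ 0).card :=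
    (ZMod.natCast_eq_zero_iff _ 2).mp hsum
  omega

lemma sum_le_of_neg_term {F : Finset (Fin 4 × Fin 4)} {f : Fin 4 × Fin 4 → ℝ}
    {p₀ : Fin 4 × Fin 4} (hp₀ : p₀ ∈ F) (hub : ∀ p ∈ F, f p ≤ 2/3)
    (hneg : f p₀ = -(2/3)) :
    ∑ p ∈ F, f p ≤ (2/3) * F.card - 4/3 := by
  rw [← Finset.add_sum_erase F f hp₀, hneg]
  have h1 : ∑ p ∈ F.erase p₀, f p ≤ (F.erase p₀).card • (2/3 : ℝ) :=
    Finset.sum_le_card_nsmul _ _ _ (fun p hp => hub p (Finset.mem_of_mem_erase hp))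
  rw [Finset.card_erase_of_mem hp₀, nsmul_eq_mul] at h1
  have hcard : 1 ≤ F.card := Finset.card_pos.mpr ⟨p₀, hp₀⟩
  have : ((F.card - 1 : ℕ) : ℝ) = (F.card : ℝ) - 1 := by
    rw [Nat.cast_sub hcard]; norm_num
  rw [this] at h1
  linarith

lemma sum_part_le {c x : Fin 4 × Fin 4 → ZMod 2} (hc : c ∈ C10) (hx : x ∈ C6)
    {w : EuclideanSpace ℝ (Fin 4 × Fin 4)} {k : ℕ} (hk : hammingNorm x = k)
    (h1 : ∀ p, x p ≠ 0 → (w p = 1 ∨ w p = -1))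
    (h2 : ∀ p, x p = 0 → w p = 0)
    (h3 : Odd {p : Fin 4 × Fin 4 | w p = -1}.ncard) :
    ∑ p : Fin 4 × Fin 4, ((if c p = 0 then (1:ℝ) else -1) * (2/3)) * w p
      ≤ (2/3) * k - 4/3 := by
  set F := Finset.univ.filter (fun p : Fin 4 × Fin 4 => x p ≠ 0) with hF
  have hFsum : ∑ p : Fin 4 × Fin 4, ((if c p = 0 then (1:ℝ) else -1) * (2/3)) * w p
      = ∑ p ∈ F, ((if c p = 0 then (1:ℝ) else -1) * (2/3)) * w p := by
    refine (Finset.sum_subset (Finset.subset_univ F) ?_).symm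
    intro p _ hp
    have : x p = 0 := by simpa [hF] using hp
    rw [h2 p this, mul_zero]
  obtain ⟨p₀, hx₀, hneg₀⟩ := exists_neg_term hx hc h1 h2 h3
  have hcard : F.card = k := by rw [← hk]; rfl
  rw [hFsum]
  have hb := sum_le_of_neg_term (F := F)
    (f := fun p => ((if c p = 0 then (1:ℝ) else -1) * (2/3)) * w p)
    (p₀ := p₀) (by simp [hF, hx₀])
    (fun p hp => by
      have hxp : x p ≠ 0 := by simpa [hF] using hp
      rcases h1 p hxp with h | h <;> rcases zmod2_cases (c p) with h' | h' <;>
        simp [h, h'] <;> norm_num)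
    (by
      show ((if c p₀ = 0 then (1:ℝ) else -1) * (2/3)) * w p₀ = -(2/3)
      calc ((if c p₀ = 0 then (1:ℝ) else -1) * (2/3)) * w p₀
          = ((if c p₀ = 0 then (1:ℝ) else -1) * w p₀) * (2/3) := by ring
        _ = -(2/3) := by rw [hneg₀]; ring)
  rw [hcard] at hb
  exact hb

lemma sqrt8_mul_self : Real.sqrt 8 * Real.sqrt 8 = 8 := Real.mul_self_sqrt (by norm_num)

lemma sqrt8_mul_sqrt2 : Real.sqrt 8 * Real.sqrt 2 = 4 := by
  rw [← Real.sqrt_mul (by norm_num : (0:ℝ) ≤ 8)]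
  rw [show (8:ℝ) * 2 = 4 ^ 2 by norm_num, Real.sqrt_sq (by norm_num : (0:ℝ) ≤ 4)]

/-- For `c ∈ C₁₀` and `s ∈ {1, -1}`: (a) `v_{c,s}` has squared norm 8;
(b) `v_{c,s}` has inner product at most 4 with every vector of the 5346-vector
17-dimensional base configuration `W`; and (c) for `(c,s) ≠ (c',s')`, the inner
product `⟪v_{c,s}, v_{c',s'}⟫` is at most 4 if and only if either `s = s'` and the
Hamming distance between `c` and `c'` is at least 6, or `s ≠ s'` and `c ≠ c'`. -/
theorem holeVector_properties :
    (∀ c ∈ C10, ∀ s : ℝ, (s = 1 ∨ s = -1) → ‖holeVector c s‖ ^ 2 = 8) ∧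
    (∀ c ∈ C10, ∀ s : ℝ, (s = 1 ∨ s = -1) →
      ∀ w ∈ baseConfig17, ⟪holeVector c s, w⟫ ≤ 4) ∧
    (∀ c ∈ C10, ∀ c' ∈ C10, ∀ s s' : ℝ, (s = 1 ∨ s = -1) → (s' = 1 ∨ s' = -1) →
      (c, s) ≠ (c', s') →
      (⟪holeVector c s, holeVector c' s'⟫ ≤ 4 ↔
        (s = s' ∧ 6 ≤ hammingDist c c') ∨ (s ≠ s' ∧ c ≠ c'))) := by
  refine ⟨?_, ?_, ?_⟩
  · -- (a)
    intro c _ s hs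
    rw [← real_inner_self_eq_norm_sq, holeVector, inner_pair17]
    have hterm : ∀ p : Fin 4 × Fin 4,
        ((if c p = 0 then (1:ℝ) else -1) * (2/3)) * ((if c p = 0 then (1:ℝ) else -1) * (2/3))
          = 4/9 := by
      intro p; split <;> norm_num
    rw [Finset.sum_congr rfl (fun p _ => hterm p), Finset.sum_const]
    have hcard : (Finset.univ : Finset (Fin 4 × Fin 4)).card = 16 := by simp
    rw [hcard]
    have h8 : s * Real.sqrt 8 / 3 * (s * Real.sqrt 8 / 3) = 8/9 := by
      rcases hs with rfl | rfl <;> linear_combination (1/9 : ℝ) * sqrt8_mul_self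
    rw [h8]
    norm_num
  · -- (b)
    intro c hc s hs w hw
    rcases hw with (hw | hw) | hw
    · obtain ⟨u, hu, rfl⟩ := hw
      rw [holeVector, inner_pair17, mul_zero, add_zero]
      rcases hu with ⟨p, q, hpq, hp, hq, hz⟩ | ⟨x, hx, hx8, h1, h2, h3⟩
      · have hpair : ∑ r : Fin 4 × Fin 4,
            ((if c r = 0 then (1:ℝ) else -1) * (2/3)) * u r
            = ((if c p = 0 then (1:ℝ) else -1) * (2/3)) * u p
              + ((if c q = 0 then (1:ℝ) else -1) * (2/3)) * u q := by
          have hsub : ∑ r : Fin 4 × Fin 4,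
              ((if c r = 0 then (1:ℝ) else -1) * (2/3)) * u r
              = ∑ r ∈ ({p, q} : Finset (Fin 4 × Fin 4)),
                ((if c r = 0 then (1:ℝ) else -1) * (2/3)) * u r := by
            refine (Finset.sum_subset (Finset.subset_univ _) ?_).symm
            intro r _ hr
            simp only [Finset.mem_insert, Finset.mem_singleton, not_or] at hr
            rw [hz r hr.1 hr.2, mul_zero]
          rw [hsub, Finset.sum_pair hpq]
        rw [hpair]
        have b1 : ((if c p = 0 then (1:ℝ) else -1) * (2/3)) * u p ≤ 4/3 := by
          rcases hp with h | h <;> rw [h] <;> split <;> norm_num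
        have b2 : ((if c q = 0 then (1:ℝ) else -1) * (2/3)) * u q ≤ 4/3 := by
          rcases hq with h | h <;> rw [h] <;> split <;> norm_num
        linarith
      · have := sum_part_le hc hx hx8 h1 h2 h3
        push_cast at this
        linarith
    · obtain ⟨v', t, ht, ⟨x, hx, hx6, h1, h2, h3⟩, rfl⟩ := hw
      rw [holeVector, inner_pair17]
      have hsum := sum_part_le hc hx hx6 h1 h2 h3
      push_cast at hsum
      have htp : s * Real.sqrt 8 / 3 * t ≤ 4/3 := by
        rcases hs with rfl | rfl <;> rcases ht with rfl | rfl <;>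
          linarith [sqrt8_mul_sqrt2,
            (by ring_nf : (1:ℝ) * Real.sqrt 8 / 3 * Real.sqrt 2
              = Real.sqrt 8 * Real.sqrt 2 / 3)]
      linarith
    · have h0 : ∀ t : ℝ, ⟪holeVector c s, pair17 0 t⟫ = s * Real.sqrt 8 / 3 * t := by
        intro t
        rw [holeVector, inner_pair17]
        have : ∀ p : Fin 4 × Fin 4, (0 : EuclideanSpace ℝ (Fin 4 × Fin 4)) p = 0 :=
          fun p => rfl
        simp [this]
      rcases hw with rfl | rfl <;> rw [h0] <;> rcases hs with rfl | rfl <;>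
        nlinarith [sqrt8_mul_self, Real.sqrt_nonneg 8]
  · -- (c)
    intro c hc c' hc' s s' hs hs' _
    set d := hammingDist c c' with hd
    have hterm : ∀ p : Fin 4 × Fin 4,
        ((if c p = 0 then (1:ℝ) else -1) * (2/3)) * ((if c' p = 0 then (1:ℝ) else -1) * (2/3))
          = if c p = c' p then (4/9 : ℝ) else -(4/9) := by
      intro p
      rcases zmod2_cases (c p) with h | h <;> rcases zmod2_cases (c' p) with h' | h' <;>
        simp [h, h'] <;> norm_num
    have hsplit : ∑ p : Fin 4 × Fin 4,
        ((if c p = 0 then (1:ℝ) else -1) * (2/3)) * ((if c' p = 0 then (1:ℝ) else -1) * (2/3))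
        = (16 - (d : ℝ)) * (4/9) - (d : ℝ) * (4/9) := by
      rw [Finset.sum_congr rfl (fun p _ => hterm p)]
      rw [← Finset.sum_filter_add_sum_filter_not Finset.univ (fun p => c p = c' p)]
      have e1 : ∑ p ∈ Finset.univ.filter (fun p : Fin 4 × Fin 4 => c p = c' p),
          (if c p = c' p then (4/9 : ℝ) else -(4/9))
          = ((Finset.univ.filter (fun p : Fin 4 × Fin 4 => c p = c' p)).card : ℝ) * (4/9) := by
        rw [Finset.sum_congr rfl (fun p hp => if_pos (Finset.mem_filter.mp hp).2),
          Finset.sum_const, nsmul_eq_mul]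
      have e2 : ∑ p ∈ Finset.univ.filter (fun p : Fin 4 × Fin 4 => ¬ c p = c' p),
          (if c p = c' p then (4/9 : ℝ) else -(4/9))
          = ((Finset.univ.filter (fun p : Fin 4 × Fin 4 => ¬ c p = c' p)).card : ℝ) * (-(4/9)) := by
        rw [Finset.sum_congr rfl (fun p hp => if_neg (Finset.mem_filter.mp hp).2),
          Finset.sum_const, nsmul_eq_mul]
      rw [e1, e2]
      have hdcard : (Finset.univ.filter (fun p : Fin 4 × Fin 4 => ¬ c p = c' p)).card = d := by
        rw [hd, hammingDist]
      have h16 : (Finset.univ.filter (fun p : Fin 4 × Fin 4 => c p = c' p)).card + d = 16 := by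
        rw [← hdcard, Finset.card_filter_add_card_filter_not]
        simp
      have : ((Finset.univ.filter (fun p : Fin 4 × Fin 4 => c p = c' p)).card : ℝ)
          = 16 - (d : ℝ) := by
        have := congrArg (fun n : ℕ => (n : ℝ)) h16
        push_cast at this
        linarith
      rw [this, hdcard]
      ring
    have hinner : ⟪holeVector c s, holeVector c' s'⟫
        = (16 - (d : ℝ)) * (4/9) - (d : ℝ) * (4/9) + s * s' * (8/9) := by
      rw [holeVector, holeVector, inner_pair17, hsplit]
      congr 1
      linear_combination (s * s' / 9 : ℝ) * sqrt8_mul_self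
    have heven : Even d := by
      rw [hd, hammingDist_eq_hammingNorm]
      exact C10_even (by rw [neg_add_eq_sub]; exact C10_sub hc' hc)
    have hne2 : d ≠ 2 := by
      rw [hd, hammingDist_eq_hammingNorm]
      exact C10_norm_ne_two (by rw [neg_add_eq_sub]; exact C10_sub hc' hc)
    rw [hinner]
    by_cases hss : s = s'
    · subst hss
      have hss1 : s * s = 1 := by rcases hs with rfl | rfl <;> norm_num
      rw [hss1]
      constructor
      · intro h
        left
        refine ⟨rfl, ?_⟩
        have h5 : 5 ≤ d := by
          by_contra hlt
          push_neg at hlt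
          have : (d : ℝ) ≤ 4 := by exact_mod_cast Nat.lt_succ_iff.mp hlt
          linarith
        obtain ⟨k, hk⟩ := heven
        omega
      · rintro (⟨-, h6⟩ | ⟨hne', -⟩)
        · have : (6 : ℝ) ≤ (d : ℝ) := by exact_mod_cast h6
          linarith
        · exact absurd rfl hne'
    · have hssn : s * s' = -1 := by
        rcases hs with rfl | rfl <;> rcases hs' with rfl | rfl
        · exact absurd rfl hss
        · norm_num
        · norm_num
        · exact absurd rfl hss
      rw [hssn]
      constructor
      · intro h
        right
        refine ⟨hss, ?_⟩
        intro hcc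
        have hd0 : d = 0 := by rw [hd, hcc, hammingDist_self]
        rw [hd0] at h
        norm_num at h
      · rintro (⟨heq, -⟩ | ⟨-, hcc⟩)
        · exact absurd heq hss
        · have hd0 : d ≠ 0 := fun h0 => hcc (hammingDist_eq_zero.mp (hd ▸ h0))
          obtain ⟨k, hk⟩ := heven
          have h3 : 3 ≤ d := by omega
          have : (3 : ℝ) ≤ (d : ℝ) := by exact_mod_cast h3
          linarith
end

section
/- Let E = {v ∈ 𝔽₂⁶ : v₁ + v₂ + v₃ + v₄ + v₅ + v₆ = 0} be the even-weight subspace of 𝔽₂⁶, and let S₀ = {(0,0,0,0,0,0), (1,1,0,0,0,0), (1,0,1,0,0,0), (1,0,0,1,0,0), (1,0,0,0,1,0), (1,0,0,0,0,1)}. Then every 6-element subset S of E in which no two distinct elements are at Hamming distance exactly 4 is obtained from S₀ by a coordinate permutation followed by a translation: there exist a permutation σ of the 6 coordinates and t ∈ E such that S = {t + σ·x : x ∈ S₀}, where (σ·x)ᵢ = x_{σ⁻¹(i)}. In particular, S₀ and its translate by (1,1,1,1,1,1) are two disjoint such 6-element subsets of E. -/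
set_option maxRecDepth 100000
set_option maxHeartbeats 1000000
set_option synthInstance.maxHeartbeats 400000
set_option synthInstance.maxSize 2048

/-- The even-weight subspace `E = {v ∈ 𝔽₂⁶ : v₁ + ⋯ + v₆ = 0}`. -/
def evenSix : Set (Fin 6 → ZMod 2) :=
  {v | ∑ i : Fin 6, v i = 0}

/-- The reference set `S₀ ⊆ 𝔽₂⁶`. -/
def S0 : Set (Fin 6 → ZMod 2) :=
  {![0,0,0,0,0,0], ![1,1,0,0,0,0], ![1,0,1,0,0,0],
   ![1,0,0,1,0,0], ![1,0,0,0,1,0], ![1,0,0,0,0,1]}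

/-- A good set: a 6-element subset of the even-weight subspace `E ⊆ 𝔽₂⁶` in which
no two distinct elements are at Hamming distance exactly 4. -/
def goodSix (S : Set (Fin 6 → ZMod 2)) : Prop :=
  S ⊆ evenSix ∧ S.ncard = 6 ∧
  ∀ x ∈ S, ∀ y ∈ S, x ≠ y → hammingDist x y ≠ 4

def Evec (a b : Fin 6) : Fin 6 → ZMod 2 := fun i => if i = a ∨ i = b then 1 else 0

def s0 : Finset (Fin 6 → ZMod 2) :=
  {![0,0,0,0,0,0], ![1,1,0,0,0,0], ![1,0,1,0,0,0],
   ![1,0,0,1,0,0], ![1,0,0,0,1,0], ![1,0,0,0,0,1]}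

lemma S0_eq : S0 = ↑s0 := by
  ext x; simp [S0, s0]

lemma S0_ncard : S0.ncard = 6 := by
  rw [S0_eq, Set.ncard_coe_finset]; decide

lemma L_wt : ∀ x : Fin 6 → ZMod 2, (∑ i, x i = 0) → hammingDist x 0 ≠ 4 → x ≠ 0 →
    x = (fun _ => 1) ∨ hammingDist x 0 = 2 := by decide

lemma L_all4 : ∀ x : Fin 6 → ZMod 2, hammingDist x 0 = 2 →
    hammingDist x (fun _ => 1) = 4 := by decide

lemma L_pair : ∀ x y : Fin 6 → ZMod 2, hammingDist x 0 = 2 → hammingDist y 0 = 2 → x ≠ y →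
    hammingDist x y ≠ 4 → ∃ i, x i = 1 ∧ y i = 1 := by decide

lemma L_split : ∀ x : Fin 6 → ZMod 2, hammingDist x 0 = 2 →
    ∃ a b, a ≠ b ∧ x = Evec a b := by decide

lemma L_mem1 : ∀ (a b i : Fin 6), Evec a b i = 1 → i = a ∨ i = b := by decide

lemma L_two : ∀ (y : Fin 6 → ZMod 2) (b c : Fin 6), y b = 1 → y c = 1 → b ≠ c →
    hammingDist y 0 = 2 → y = Evec b c := by decide

lemma L_tri : ∀ (w : Fin 6 → ZMod 2) (a b c : Fin 6), hammingDist w 0 = 2 → a ≠ b → b ≠ c → a ≠ c →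
    (∃ i, w i = 1 ∧ Evec a b i = 1) → (∃ i, w i = 1 ∧ Evec b c i = 1) →
    (∃ i, w i = 1 ∧ Evec a c i = 1) → (w = Evec a b ∨ w = Evec b c ∨ w = Evec a c) := by decide

lemma L_star : ∀ (x : Fin 6 → ZMod 2) (v : Fin 6), hammingDist x 0 = 2 → x v = 1 →
    ∃ w, w ≠ v ∧ x = Evec v w := by decide

lemma LS0 : ∀ j : Fin 6, j ≠ 0 → Evec 0 j ∈ S0 := by
  intro j hj
  rw [S0_eq]; norm_cast
  revert j; decide

lemma zero_mem_S0 : (0 : Fin 6 → ZMod 2) ∈ S0 := by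
  rw [S0_eq]; norm_cast

lemma z2 : ∀ z : ZMod 2, z ≠ 1 → z = 0 := by decide

lemma Evec_left (a b : Fin 6) : Evec a b a = 1 := by simp [Evec]
lemma Evec_right (a b : Fin 6) : Evec a b b = 1 := by simp [Evec]

lemma dist_add (t x y : Fin 6 → ZMod 2) : hammingDist (t + x) (t + y) = hammingDist x y := by
  unfold hammingDist
  congr 1
  apply Finset.filter_congr
  intro i _
  simp

lemma reindex_Evec (σ : Equiv.Perm (Fin 6)) (a b : Fin 6) :
    (fun i => Evec a b (σ⁻¹ i)) = Evec (σ a) (σ b) := by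
  funext i
  simp only [Evec]
  congr 1
  simp only [eq_iff_iff]
  constructor
  · rintro (h | h) <;> [left; right] <;>
      (rw [← h]; simp)
  · rintro (h | h) <;> [left; right] <;>
      (subst h; simp)

/-- Key lemma: a good set containing `0` is a coordinate permutation of `S0`. -/
lemma key (T : Set (Fin 6 → ZMod 2)) (hT : goodSix T) (h0 : (0 : Fin 6 → ZMod 2) ∈ T) :
    ∃ σ : Equiv.Perm (Fin 6), T = (fun x => fun i => x (σ⁻¹ i)) '' S0 := by
  obtain ⟨hE, hcard, hdist⟩ := hT
  set T' : Set (Fin 6 → ZMod 2) := T \ {0} with hT'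
  have hT'card : T'.ncard = 5 := by
    rw [hT', Set.ncard_diff_singleton_of_mem h0]
    rw [hcard]
  -- every element of T' is all-ones or weight 2
  have hP : ∀ x ∈ T', x = (fun _ => 1) ∨ hammingDist x 0 = 2 := by
    intro x hx
    exact L_wt x (hE hx.1) (hdist x hx.1 0 h0 hx.2 ·) hx.2
  -- all-ones is not in T'
  have hwt : ∀ x ∈ T', hammingDist x 0 = 2 := by
    intro x hx
    rcases hP x hx with h1 | h2
    · exfalso
      have h15 : 1 < T'.ncard := by omega
      obtain ⟨y, hy, hyx⟩ := Set.exists_ne_of_one_lt_ncard h15 x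
      rcases hP y hy with h1' | h2'
      · exact hyx (by rw [h1', h1])
      · exact hdist y hy.1 x hx.1 hyx (by rw [h1]; exact L_all4 y h2')
    · exact h2
  -- pairwise intersecting
  have hmeet : ∀ x ∈ T', ∀ y ∈ T', x ≠ y → ∃ i, x i = 1 ∧ y i = 1 := by
    intro x hx y hy hxy
    exact L_pair x y (hwt x hx) (hwt y hy) hxy (hdist x hx.1 y hy.1 hxy)
  -- common coordinate
  have hstar : ∃ v, ∀ x ∈ T', x v = 1 := by
    have hne : T'.Nonempty := by
      rw [← Set.ncard_pos (Set.toFinite T')]; omega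
    obtain ⟨x1, hx1⟩ := hne
    obtain ⟨a, b, hab, hx1e⟩ := L_split x1 (hwt x1 hx1)
    by_cases ha : ∀ x ∈ T', x a = 1
    · exact ⟨a, ha⟩
    by_cases hb : ∀ x ∈ T', x b = 1
    · exact ⟨b, hb⟩
    exfalso
    push_neg at ha hb
    obtain ⟨y, hy, hya⟩ := ha
    obtain ⟨z, hz, hzb⟩ := hb
    have hya0 : y a = 0 := z2 _ hya
    have hzb0 : z b = 0 := z2 _ hzb
    have hyx1 : y ≠ x1 := by
      intro h; rw [h, hx1e] at hya0; rw [Evec_left] at hya0; exact one_ne_zero hya0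
    have hzx1 : z ≠ x1 := by
      intro h; rw [h, hx1e] at hzb0; rw [Evec_right] at hzb0; exact one_ne_zero hzb0
    -- y b = 1
    have hyb : y b = 1 := by
      obtain ⟨i, hxi, hyi⟩ := hmeet x1 hx1 y hy (Ne.symm hyx1)
      rcases L_mem1 a b i (hx1e ▸ hxi) with rfl | rfl
      · rw [hya0] at hyi; exact absurd hyi (by norm_num)
      · exact hyi
    have hza : z a = 1 := by
      obtain ⟨i, hxi, hzi⟩ := hmeet x1 hx1 z hz (Ne.symm hzx1)
      rcases L_mem1 a b i (hx1e ▸ hxi) with rfl | rfl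
      · exact hzi
      · rw [hzb0] at hzi; exact absurd hzi (by norm_num)
    have hyz : y ≠ z := by
      intro h; rw [h] at hya0; rw [hya0] at hza; exact zero_ne_one hza
    obtain ⟨c, hyc, hzc⟩ := hmeet y hy z hz hyz
    have hca : c ≠ a := by intro h; rw [h, hya0] at hyc; exact zero_ne_one hyc
    have hcb : c ≠ b := by intro h; rw [h, hzb0] at hzc; exact zero_ne_one hzc
    have hye : y = Evec b c := L_two y b c hyb hyc (Ne.symm hcb) (hwt y hy)
    have hze : z = Evec a c := L_two z a c hza hzc (Ne.symm hca) (hwt z hz)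
    -- a fourth element
    have hsub : ¬ (T' ⊆ {x1, y, z}) := by
      intro hsb
      have := Set.ncard_le_ncard hsb (Set.toFinite _)
      have h3 : ({x1, y, z} : Set (Fin 6 → ZMod 2)).ncard ≤ 3 := by
        apply le_trans (Set.ncard_insert_le _ _)
        have := Set.ncard_insert_le y ({z} : Set (Fin 6 → ZMod 2))
        simp [Set.ncard_singleton] at this ⊢
        omega
      omega
    rw [Set.not_subset] at hsub
    obtain ⟨w, hw, hwn⟩ := hsub
    simp only [Set.mem_insert_iff, Set.mem_singleton_iff, not_or] at hwn
    obtain ⟨hw1, hw2, hw3⟩ := hwn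
    have m1 : ∃ i, w i = 1 ∧ Evec a b i = 1 := hx1e ▸ hmeet w hw x1 hx1 (by rw [hx1e] at hw1 ⊢; exact hx1e ▸ hw1)
    have m2 : ∃ i, w i = 1 ∧ Evec b c i = 1 := hye ▸ hmeet w hw y hy hw2
    have m3 : ∃ i, w i = 1 ∧ Evec a c i = 1 := hze ▸ hmeet w hw z hz hw3
    rcases L_tri w a b c (hwt w hw) hab (Ne.symm hcb) (Ne.symm hca) m1 m2 m3 with h | h | h
    · exact hw1 (by rw [h, hx1e])
    · exact hw2 (by rw [h, hye])
    · exact hw3 (by rw [h, hze])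
  obtain ⟨v, hv⟩ := hstar
  refine ⟨Equiv.swap 0 v, ?_⟩
  set σ := Equiv.swap 0 v with hσ
  set f : (Fin 6 → ZMod 2) → (Fin 6 → ZMod 2) := fun x => fun i => x (σ⁻¹ i) with hf
  have hfinj : Function.Injective f := by
    intro x y h
    funext i
    have := congrFun h (σ i)
    simpa [hf] using this
  have hsubU : T ⊆ f '' S0 := by
    intro x hx
    by_cases hx0 : x = 0
    · refine ⟨0, zero_mem_S0, ?_⟩
      subst hx0; funext i; rfl
    · have hxT' : x ∈ T' := ⟨hx, hx0⟩
      obtain ⟨w, hwv, hxe⟩ := L_star x v (hwt x hxT') (hv x hxT')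
      have hσw : σ w ≠ 0 := by
        intro h
        apply hwv
        have : σ w = σ v := by rw [h, hσ, Equiv.swap_apply_right]
        exact σ.injective this
      refine ⟨Evec 0 (σ w), LS0 _ hσw, ?_⟩
      show (fun i => Evec 0 (σ w) (σ⁻¹ i)) = x
      rw [hxe]
      rw [reindex_Evec σ 0 (σ w), hσ, Equiv.swap_apply_left, Equiv.swap_apply_self]
  have hUcard : (f '' S0).ncard = 6 := by
    rw [Set.ncard_image_of_injective _ hfinj, S0_ncard]
  exact Set.eq_of_subset_of_ncard_le hsubU (by omega) (Set.toFinite _)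

/-- Every 6-element subset of the even-weight subspace of `𝔽₂⁶` avoiding Hamming
distance 4 is obtained from `S₀` by permuting coordinates and translating by an
element of `E`; in particular, `S₀` and its translate by `(1,1,1,1,1,1)` are two
disjoint such sets. -/
theorem goodSix_classification :
    (∀ S : Set (Fin 6 → ZMod 2), goodSix S →
      ∃ (σ : Equiv.Perm (Fin 6)) (t : Fin 6 → ZMod 2), t ∈ evenSix ∧
        S = (fun x => t + fun i => x (σ⁻¹ i)) '' S0) ∧
    goodSix S0 ∧
    goodSix ((fun x => ![1,1,1,1,1,1] + x) '' S0) ∧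
    Disjoint S0 ((fun x => ![1,1,1,1,1,1] + x) '' S0) := by
  have him : ((fun x => ![1,1,1,1,1,1] + x) '' S0)
      = ↑(s0.image (fun x => ![1,1,1,1,1,1] + x)) := by
    rw [S0_eq, Finset.coe_image]
  refine ⟨?_, ?_, ?_, ?_⟩
  · -- classification
    intro S hS
    have h6 := hS.2.1
    have hne : S.Nonempty := by
      rw [← Set.ncard_pos (Set.toFinite S)]; omega
    obtain ⟨t, ht⟩ := hne
    have htE : t ∈ evenSix := hS.1 ht
    set g := fun x : Fin 6 → ZMod 2 => t + x with hg
    have hz : ∀ a b : ZMod 2, a + (a + b) = b := by decide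
    have hgg : ∀ x, g (g x) = x := by
      intro x; funext i; exact hz (t i) (x i)
    have hT : goodSix (g '' S) := by
      refine ⟨?_, ?_, ?_⟩
      · rintro _ ⟨x, hx, rfl⟩
        have hx' : ∑ i, x i = 0 := hS.1 hx
        have ht' : ∑ i, t i = 0 := htE
        show ∑ i, (t + x) i = 0
        simp only [Pi.add_apply]
        rw [Finset.sum_add_distrib, hx', ht', add_zero]
      · rw [hg, Set.ncard_image_of_injective _ (add_right_injective t), h6]
      · rintro _ ⟨x, hx, rfl⟩ _ ⟨y, hy, rfl⟩ hxy
        rw [hg]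
        simp only
        rw [dist_add]
        exact hS.2.2 x hx y hy (by rintro rfl; exact hxy rfl)
    have h0 : (0 : Fin 6 → ZMod 2) ∈ g '' S := by
      refine ⟨t, ht, ?_⟩
      funext i
      exact (by decide : ∀ a : ZMod 2, a + a = 0) (t i)
    obtain ⟨σ, hσ⟩ := key _ hT h0
    refine ⟨σ, t, htE, ?_⟩
    have hSgg : S = g '' (g '' S) := by
      rw [Set.image_image]
      simp only [hgg, Set.image_id']
    rw [hSgg, hσ, Set.image_image]
  · -- goodSix S0
    refine ⟨?_, ?_, ?_⟩
    · intro x hx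
      rw [S0_eq, Finset.mem_coe] at hx
      exact (by decide : ∀ x ∈ s0, ∑ i : Fin 6, x i = 0) x hx
    · exact S0_ncard
    · intro x hx y hy
      rw [S0_eq, Finset.mem_coe] at hx hy
      exact (by decide : ∀ x ∈ s0, ∀ y ∈ s0, x ≠ y → hammingDist x y ≠ 4) x hx y hy
  · -- goodSix of translate
    rw [him]
    refine ⟨?_, ?_, ?_⟩
    · intro x hx
      rw [Finset.mem_coe] at hx
      exact (by decide : ∀ x ∈ s0.image (fun x => ![1,1,1,1,1,1] + x),
        ∑ i : Fin 6, x i = 0) x hx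
    · rw [Set.ncard_coe_finset]; decide
    · intro x hx y hy
      rw [Finset.mem_coe] at hx hy
      exact (by decide : ∀ x ∈ s0.image (fun x => ![1,1,1,1,1,1] + x),
        ∀ y ∈ s0.image (fun x => ![1,1,1,1,1,1] + x),
        x ≠ y → hammingDist x y ≠ 4) x hx y hy
  · -- disjointness
    rw [him, S0_eq, Finset.disjoint_coe]
    decide
end
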